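/- Let s be a primitive string of length n over Σ with a context adaptive ordering, let c ∈ Σ, and let y be a string with |y| < n. Then occ_s(c·y) = #{t ∈ Rng(y) : L[t] = c}, i.e., the number of rotations of s with prefix c·y equals the number of occurrences of the symbol c in the portion of L = BWT_*(s) corresponding to the rows prefixed by y. -/

import Mathlib

open scoped Classical

variable {A : Type*}

/-- Longest common prefix of two lists. -/
def lcp [DecidableEq A] : List A → List A → List A
  | a :: as, b :: bs => if a = b then a :: lcp as bs else []
  | _, _ => []

/-- A string is primitive if its cyclic rotations are pairwise distinct. -/
def Primitive (s : List A) : Prop :=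
  ∀ i j, i < s.length → j < s.length → s.rotate i = s.rotate j → i = j

/-- The context-adaptive comparison relation on rotations. -/
def Prec [DecidableEq A] (π : List A → A → A → Prop) (u v : List A) : Prop :=
  ∃ a b, u[(lcp u v).length]? = some a ∧ v[(lcp u v).length]? = some b ∧
    π (lcp u v) a b

/-- `occ s w` is the number of cyclic rotations of `s` having `w` as a prefix. -/
noncomputable def occ [DecidableEq A] (s w : List A) : ℕ :=
  ((Finset.range s.length).filter (fun i => w <+: s.rotate i)).card

/-- `rank π s i` is the row index of the rotation `s.rotate i` in the sorted
rotation matrix `M_*(s)`, i.e. the number of rotations that `≺`-precede it. -/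
noncomputable def rank [DecidableEq A] (π : List A → A → A → Prop)
    (s : List A) (i : ℕ) : ℕ :=
  ((Finset.range s.length).filter
    (fun j => Prec π (s.rotate j) (s.rotate i))).card

section Aux
set_option linter.unusedSectionVars false
variable [DecidableEq A] {π : List A → A → A → Prop}

lemma lcp_self (u : List A) : lcp u u = u := by
  induction u with
  | nil => rfl
  | cons a as ih => simp [lcp, ih]

lemma lcp_comm (u v : List A) : lcp u v = lcp v u := by
  induction u generalizing v with
  | nil => cases v <;> rfl
  | cons a as ih =>
    cases v with
    | nil => rfl
    | cons b bs =>
      by_cases h : a = b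
      · subst h; simp [lcp, ih]
      · simp [lcp, h, Ne.symm h]

lemma lcp_prefix_left (u v : List A) : lcp u v <+: u := by
  induction u generalizing v with
  | nil => cases v <;> simp [lcp]
  | cons a as ih =>
    cases v with
    | nil => simp [lcp]
    | cons b bs =>
      by_cases h : a = b
      · subst h; simpa [lcp] using ih bs
      · simp [lcp, h]

lemma lcp_prefix_right (u v : List A) : lcp u v <+: v := by
  rw [lcp_comm]; exact lcp_prefix_left v u

lemma lcp_get_ne {u v : List A} (hne : u ≠ v) (hlen : u.length = v.length) :
    ∃ a b, a ≠ b ∧ u[(lcp u v).length]? = some a ∧ v[(lcp u v).length]? = some b := by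
  induction u generalizing v with
  | nil =>
    cases v with
    | nil => exact absurd rfl hne
    | cons b bs => simp at hlen
  | cons a as ih =>
    cases v with
    | nil => simp at hlen
    | cons b bs =>
      by_cases h : a = b
      · subst h
        have hne' : as ≠ bs := fun h' => hne (by rw [h'])
        obtain ⟨x, z, hxz, hx, hz⟩ := ih hne' (by simpa using hlen)
        exact ⟨x, z, hxz, by simpa [lcp] using hx, by simpa [lcp] using hz⟩
      · exact ⟨a, b, h, by simp [lcp, h], by simp [lcp, h]⟩

lemma lcp_eq_of {x u v : List A} {a b : A} (hu : x <+: u) (hv : x <+: v)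
    (ha : u[x.length]? = some a) (hb : v[x.length]? = some b) (hab : a ≠ b) :
    lcp u v = x := by
  induction x generalizing u v with
  | nil =>
    cases u with
    | nil => simp at ha
    | cons a' u' =>
      cases v with
      | nil => simp at hb
      | cons b' v' =>
        simp at ha hb
        subst ha; subst hb
        simp [lcp, hab]
  | cons d x' ih =>
    obtain ⟨u', rfl⟩ := hu
    obtain ⟨v', rfl⟩ := hv
    simp only [List.cons_append, lcp, if_pos rfl, ite_true, List.cons.injEq, true_and]
    exact ih (List.prefix_append _ _) (List.prefix_append _ _)
      (by simpa using ha) (by simpa using hb)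

lemma prefix_getElem? {x l : List A} (h : x <+: l) {i : ℕ} (hi : i < x.length) :
    l[i]? = x[i]? := by
  obtain ⟨t, rfl⟩ := h
  exact List.getElem?_append_left hi

variable {π : List A → A → A → Prop}

lemma prec_irrefl (u : List A) : ¬ Prec π u u := by
  rintro ⟨a, b, ha, -, -⟩
  rw [lcp_self] at ha
  simp at ha

lemma prec_total (hπ : ∀ x, IsStrictTotalOrder A (π x)) {u v : List A}
    (hne : u ≠ v) (hlen : u.length = v.length) :
    Prec π u v ∨ Prec π v u := by
  obtain ⟨a, b, hab, ha, hb⟩ := lcp_get_ne hne hlen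
  haveI := hπ (lcp u v)
  rcases trichotomous_of (π (lcp u v)) a b with h | h | h
  · exact Or.inl ⟨a, b, ha, hb, h⟩
  · exact absurd h hab
  · exact Or.inr ⟨b, a, by rw [lcp_comm]; exact hb, by rw [lcp_comm]; exact ha,
      by rw [lcp_comm]; exact h⟩

lemma prec_asymm (hπ : ∀ x, IsStrictTotalOrder A (π x)) {u v : List A}
    (h1 : Prec π u v) (h2 : Prec π v u) : False := by
  obtain ⟨a, b, ha, hb, hab⟩ := h1
  obtain ⟨b', a', hb', ha', hba⟩ := h2
  rw [lcp_comm v u] at hb' ha' hba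
  rw [ha] at ha'; rw [hb] at hb'
  cases ha'; cases hb'
  exact (hπ _).irrefl a ((hπ _).trans a b a hab hba)

lemma prec_trans (hπ : ∀ x, IsStrictTotalOrder A (π x)) {u v w : List A}
    (h1 : Prec π u v) (h2 : Prec π v w) : Prec π u w := by
  obtain ⟨a, b, ha, hb, hab⟩ := h1
  obtain ⟨b', cc, hb', hc, hbc⟩ := h2
  set x1 := lcp u v with hx1
  set x2 := lcp v w with hx2
  rcases lt_trichotomy x1.length x2.length with h | h | h
  · have hx12 : x1 <+: x2 :=
      List.prefix_of_prefix_length_le (lcp_prefix_right u v) (lcp_prefix_left v w) h.le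
    have hw : w[x1.length]? = some b := by
      rw [prefix_getElem? (lcp_prefix_right v w) h,
        ← prefix_getElem? (lcp_prefix_left v w) h]
      exact hb
    have hne : a ≠ b := fun he => (hπ x1).irrefl a (he ▸ hab)
    have heq : lcp u w = x1 := lcp_eq_of (lcp_prefix_left u v)
      (hx12.trans (lcp_prefix_right v w)) ha hw hne
    exact ⟨a, b, by rw [heq]; exact ha, by rw [heq]; exact hw, by rw [heq]; exact hab⟩
  · have hx : x1 = x2 := by
      have hp : x1 <+: x2 :=
        List.prefix_of_prefix_length_le (lcp_prefix_right u v) (lcp_prefix_left v w) h.le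
      exact hp.eq_of_length h
    rw [← hx] at hb' hc hbc
    rw [hb] at hb'; cases hb'
    have hac : π x1 a cc := (hπ x1).trans a b cc hab hbc
    have hne : a ≠ cc := fun he => (hπ x1).irrefl a (he ▸ hac)
    have heq : lcp u w = x1 := lcp_eq_of (lcp_prefix_left u v)
      (hx ▸ lcp_prefix_right v w) ha hc hne
    exact ⟨a, cc, by rw [heq]; exact ha, by rw [heq]; exact hc, by rw [heq]; exact hac⟩
  · have hx21 : x2 <+: x1 :=
      List.prefix_of_prefix_length_le (lcp_prefix_left v w) (lcp_prefix_right u v) h.le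
    have hu : u[x2.length]? = some b' := by
      rw [prefix_getElem? (lcp_prefix_left u v) h,
        ← prefix_getElem? (lcp_prefix_right u v) h]
      exact hb'
    have hne : b' ≠ cc := fun he => (hπ x2).irrefl b' (he ▸ hbc)
    have heq : lcp u w = x2 := lcp_eq_of (hx21.trans (lcp_prefix_left u v))
      (lcp_prefix_right v w) hu hc hne
    exact ⟨b', cc, by rw [heq]; exact hu, by rw [heq]; exact hc, by rw [heq]; exact hbc⟩

lemma rank_lt {s : List A} {i : ℕ} (hi : i < s.length) : rank π s i < s.length := by
  have hsub : (Finset.range s.length).filter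
      (fun j => Prec π (s.rotate j) (s.rotate i)) ⊂ Finset.range s.length := by
    refine ⟨Finset.filter_subset _ _, fun hsup => ?_⟩
    have := hsup (Finset.mem_range.mpr hi)
    rw [Finset.mem_filter] at this
    exact prec_irrefl _ this.2
  simpa [rank] using Finset.card_lt_card hsub

lemma rank_lt_rank (hπ : ∀ x, IsStrictTotalOrder A (π x)) {s : List A} {i j : ℕ}
    (hi : i < s.length) (h : Prec π (s.rotate i) (s.rotate j)) :
    rank π s i < rank π s j := by
  apply Finset.card_lt_card
  constructor
  · intro k hk
    rw [Finset.mem_filter] at hk ⊢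
    exact ⟨hk.1, prec_trans hπ hk.2 h⟩
  · intro hsub
    have hi' := hsub (Finset.mem_filter.mpr ⟨Finset.mem_range.mpr hi, h⟩)
    rw [Finset.mem_filter] at hi'
    exact prec_irrefl _ hi'.2

lemma rank_injOn (hπ : ∀ x, IsStrictTotalOrder A (π x)) {s : List A}
    (hprim : Primitive s) {i j : ℕ} (hi : i < s.length) (hj : j < s.length)
    (h : rank π s i = rank π s j) : i = j := by
  by_contra hne
  have hrot : s.rotate i ≠ s.rotate j := fun he => hne (hprim i j hi hj he)
  rcases prec_total hπ hrot (by simp) with hp | hp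
  · exact absurd h (Nat.ne_of_lt (rank_lt_rank hπ hi hp))
  · exact absurd h.symm (Nat.ne_of_lt (rank_lt_rank hπ hj hp))

lemma key {y : List A} {c : A} {u : List A} (hu : y.length < u.length) :
    (c :: y <+: u) ↔ (y <+: u.rotate 1 ∧ (u.rotate 1).getLast? = some c) := by
  cases u with
  | nil => simp at hu
  | cons d rest =>
    have hrot : (d :: rest).rotate 1 = rest ++ [d] := by
      rw [List.rotate_cons_succ, List.rotate_zero]
    rw [hrot, List.cons_prefix_cons]
    simp only [List.length_cons, Nat.lt_succ_iff] at hu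
    constructor
    · rintro ⟨rfl, hpre⟩
      exact ⟨hpre.trans (List.prefix_append _ _), by simp [List.getLast?_concat]⟩
    · rintro ⟨hpre, hlast⟩
      rw [List.getLast?_concat] at hlast
      cases hlast
      refine ⟨rfl, ?_⟩
      have := List.prefix_iff_eq_take.mp hpre
      rw [List.take_append_of_le_length hu] at this
      exact this ▸ List.take_prefix _ _

theorem stmt5' (hπ : ∀ x, IsStrictTotalOrder A (π x))
    (s : List A) (hs : 1 ≤ s.length) (hprim : Primitive s)
    (c : A) (y : List A) (hy : y.length < s.length) :
    occ s (c :: y) =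
    ((Finset.range s.length).filter (fun t => ∃ i < s.length,
        rank π s i = t ∧ y <+: s.rotate i ∧
        (s.rotate i).getLast? = some c)).card := by
  have himg : (Finset.range s.length).filter (fun t => ∃ i < s.length,
      rank π s i = t ∧ y <+: s.rotate i ∧ (s.rotate i).getLast? = some c) =
      ((Finset.range s.length).filter
        (fun i => y <+: s.rotate i ∧ (s.rotate i).getLast? = some c)).image (rank π s) := by
    ext t
    simp only [Finset.mem_filter, Finset.mem_image, Finset.mem_range]
    constructor
    · rintro ⟨-, i, hi, hr, h1, h2⟩
      exact ⟨i, ⟨hi, h1, h2⟩, hr⟩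
    · rintro ⟨i, ⟨hi, h1, h2⟩, hr⟩
      exact ⟨hr ▸ rank_lt hi, i, hi, hr, h1, h2⟩
  rw [himg, Finset.card_image_of_injOn (fun i hi j hj hij => by
    simp only [Finset.mem_coe, Finset.mem_filter, Finset.mem_range] at hi hj
    exact rank_injOn hπ hprim hi.1 hj.1 hij)]
  rw [occ]
  apply Finset.card_bij' (fun i _ => (i + 1) % s.length)
    (fun j _ => (j + (s.length - 1)) % s.length)
  · intro i hi
    simp only [Finset.mem_filter, Finset.mem_range] at hi ⊢
    refine ⟨Nat.mod_lt _ (by omega), ?_⟩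
    have h1 : s.rotate ((i + 1) % s.length) = (s.rotate i).rotate 1 := by
      rw [List.rotate_mod, ← List.rotate_rotate]
    have hlen : y.length < (s.rotate i).length := by simpa using hy
    have h2 := (key hlen).mp hi.2
    show y <+: s.rotate ((i + 1) % s.length) ∧
      (s.rotate ((i + 1) % s.length)).getLast? = some c
    rw [h1]
    exact h2
  · intro j hj
    simp only [Finset.mem_filter, Finset.mem_range] at hj ⊢
    refine ⟨Nat.mod_lt _ (by omega), ?_⟩
    have hlen : y.length < (s.rotate ((j + (s.length - 1)) % s.length)).length := by
      simpa using hy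
    show c :: y <+: s.rotate ((j + (s.length - 1)) % s.length)
    rw [key hlen]
    have hm : ((j + (s.length - 1)) % s.length + 1) % s.length = j := by
      rw [Nat.mod_add_mod]
      have h3 : j + (s.length - 1) + 1 = j + s.length := by omega
      rw [h3, Nat.add_mod_right, Nat.mod_eq_of_lt hj.1]
    have h1 : (s.rotate ((j + (s.length - 1)) % s.length)).rotate 1 = s.rotate j := by
      rw [List.rotate_rotate]
      calc s.rotate ((j + (s.length - 1)) % s.length + 1)
          = s.rotate (((j + (s.length - 1)) % s.length + 1) % s.length) := by
            rw [List.rotate_mod]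
        _ = s.rotate j := by rw [hm]
    rw [h1]
    exact hj.2
  · intro i hi
    simp only [Finset.mem_filter, Finset.mem_range] at hi
    rw [Nat.mod_add_mod]
    have h3 : i + 1 + (s.length - 1) = i + s.length := by omega
    rw [h3, Nat.add_mod_right, Nat.mod_eq_of_lt hi.1]
  · intro j hj
    simp only [Finset.mem_filter, Finset.mem_range] at hj
    rw [Nat.mod_add_mod]
    have h3 : j + (s.length - 1) + 1 = j + s.length := by omega
    rw [h3, Nat.add_mod_right, Nat.mod_eq_of_lt hj.1]

end Aux

/-- `occ s (c·y)` equals the number of rows `t` in `Rng(y)` such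
that `L[t] = c`, where `L = BWT_*(s)`: row `t` is the rotation with rank `t`,
it belongs to `Rng(y)` if it has `y` as a prefix, and `L[t]` is its last
symbol. -/
theorem stmt5 [Fintype A] [DecidableEq A]
    (π : List A → A → A → Prop) (hπ : ∀ x, IsStrictTotalOrder A (π x))
    (s : List A) (hs : 1 ≤ s.length) (hprim : Primitive s)
    (c : A) (y : List A) (hy : y.length < s.length) :
    occ s (c :: y) =
    ((Finset.range s.length).filter (fun t => ∃ i < s.length,
        rank π s i = t ∧ y <+: s.rotate i ∧
        (s.rotate i).getLast? = some c)).card := by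
  exact stmt5' hπ s hs hprim c y hy
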